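/- Let P(q) = ∑_{j=0}^n q^j a_j be a quaternionic polynomial with coefficients a_j ∈ ℍ. Then the maximum of |P| over the closed unit ball is attained on the boundary sphere: max_{|q| ≤ 1} |P(q)| = max_{|q| = 1} |P(q)|. -/

import Mathlib

open Quaternion

private lemma quat_norm_eq_sqrt_normSq (x : ℍ[ℝ]) :
    ‖x‖ = Real.sqrt (Quaternion.normSq x) := by
  rw [Quaternion.normSq_eq_norm_mul_self]
  exact (Real.sqrt_mul_self (norm_nonneg x)).symm

private lemma quat_slice_norm {u : ℍ[ℝ]} (hre : u.re = 0) (hnorm : ‖u‖ = 1) (r s : ℝ) :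
    ‖(r : ℍ[ℝ]) + s • u‖ = Real.sqrt (r ^ 2 + s ^ 2) := by
  have h1 : u.imI ^ 2 + u.imJ ^ 2 + u.imK ^ 2 = 1 := by
    have := Quaternion.normSq_eq_norm_mul_self u
    rw [hnorm, Quaternion.normSq_def', hre] at this
    linarith
  rw [quat_norm_eq_sqrt_normSq, Quaternion.normSq_def']
  congr 1
  simp only [Quaternion.re_add, Quaternion.imI_add, Quaternion.imJ_add, Quaternion.imK_add,
    Quaternion.re_coe, Quaternion.imI_coe, Quaternion.imJ_coe, Quaternion.imK_coe,
    Quaternion.re_smul, Quaternion.imI_smul, Quaternion.imJ_smul, Quaternion.imK_smul,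
    smul_eq_mul, hre, mul_zero, add_zero, zero_add]
  ring_nf
  nlinarith [h1]

private lemma quat_imaginary_sq {u : ℍ[ℝ]} (hre : u.re = 0) (hnorm : ‖u‖ = 1) :
    u * u = -1 := by
  have hstar : star u = -u := by
    ext <;> simp [Quaternion.re_star, hre]
  have h1 : Quaternion.normSq u = 1 := by
    rw [Quaternion.normSq_eq_norm_mul_self, hnorm, mul_one]
  have := Quaternion.self_mul_star u
  rw [hstar, mul_neg, h1] at this
  have h2 : u * u = -((1 : ℝ) : ℍ[ℝ]) := by
    rw [← this]; exact (neg_neg _).symm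
  simpa using h2

private lemma aux_max_modulus (n : ℕ) (a : ℕ → ℍ[ℝ]) {C : ℝ}
    (hC : ∀ w : ℍ[ℝ], ‖w‖ = 1 → ‖∑ j ∈ Finset.range (n + 1), w ^ j * a j‖ ≤ C)
    {q : ℍ[ℝ]} (hq : ‖q‖ ≤ 1) :
    ‖∑ j ∈ Finset.range (n + 1), q ^ j * a j‖ ≤ C := by
  -- pick an imaginary unit u and s ≥ 0 with q = q.re + s • u
  obtain ⟨u, hre, hnorm, s, hq'⟩ :
      ∃ u : ℍ[ℝ], u.re = 0 ∧ ‖u‖ = 1 ∧ ∃ s : ℝ, q = (q.re : ℍ[ℝ]) + s • u := by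
    by_cases h : q.im = 0
    · refine ⟨⟨0, 1, 0, 0⟩, rfl, ?_, 0, ?_⟩
      · erw [quat_norm_eq_sqrt_normSq, Quaternion.normSq_def']
        norm_num
      · have := Quaternion.re_add_im q
        rw [h, add_zero] at this
        erw [zero_smul, add_zero]
        exact this.symm
    · refine ⟨‖q.im‖⁻¹ • q.im, by simp, ?_, ‖q.im‖, ?_⟩
      · rw [norm_smul, norm_inv, norm_norm, inv_mul_cancel₀ (norm_ne_zero_iff.mpr h)]
      · rw [smul_smul, mul_inv_cancel₀ (norm_ne_zero_iff.mpr h), one_smul,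
          Quaternion.re_add_im]
  have hu2 : u * u = -1 := quat_imaginary_sq hre hnorm
  set φ : ℂ →ₐ[ℝ] ℍ[ℝ] := Complex.liftAux u hu2 with hφ
  have hφnorm : ∀ z : ℂ, ‖φ z‖ = ‖z‖ := by
    intro z
    rw [hφ, Complex.liftAux_apply]
    have : (algebraMap ℝ ℍ[ℝ] z.re) = ((z.re : ℝ) : ℍ[ℝ]) := rfl
    rw [this, quat_slice_norm hre hnorm, Complex.norm_def,
      Complex.normSq_apply]
    ring_nf
  letI : Module ℂ ℍ[ℝ] := Module.compHom ℍ[ℝ] (φ.toRingHom)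
  have hsmul : ∀ (z : ℂ) (x : ℍ[ℝ]), z • x = φ z * x := fun _ _ => rfl
  letI : NormedSpace ℂ ℍ[ℝ] :=
    { norm_smul_le := fun z x => by
        rw [hsmul, norm_mul, hφnorm] }
  set f : ℂ → ℍ[ℝ] := fun z => ∑ j ∈ Finset.range (n + 1), φ z ^ j * a j with hf
  have hdiff : Differentiable ℂ f := by
    have hfe : f = fun z => ∑ j ∈ Finset.range (n + 1),
        ContinuousLinearMap.toSpanSingleton ℂ (a j) (z ^ j) := by
      funext z
      refine Finset.sum_congr rfl fun j _ => ?_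
      show φ z ^ j * a j = (z ^ j) • a j
      rw [hsmul, map_pow]
    rw [hfe]
    exact Differentiable.fun_sum fun j _ =>
      ((ContinuousLinearMap.toSpanSingleton ℂ (a j)).differentiable).comp
        (differentiable_pow j)
  set z : ℂ := ⟨q.re, s⟩ with hz
  have hφz : φ z = q := by
    rw [hφ, Complex.liftAux_apply]
    exact hq'.symm
  have hzball : z ∈ closure (Metric.ball (0 : ℂ) 1) := by
    rw [closure_ball (0 : ℂ) one_ne_zero, Metric.mem_closedBall, dist_zero_right,
      ← hφnorm, hφz]
    exact hq
  have key : ‖f z‖ ≤ C := by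
    refine Complex.norm_le_of_forall_mem_frontier_norm_le Metric.isBounded_ball
      hdiff.diffContOnCl (fun w hw => ?_) hzball
    rw [frontier_ball (0 : ℂ) one_ne_zero, mem_sphere_zero_iff_norm] at hw
    exact hC (φ w) (by rw [hφnorm, hw])
  rw [hf] at key
  simpa [hφz] using key

/-- Maximum modulus principle for quaternionic polynomials: the maximum of `‖P‖`
over the closed unit ball is attained on the boundary sphere. -/
theorem max_modulus_on_sphere (n : ℕ) (a : ℕ → ℍ[ℝ]) :
    sSup {y : ℝ | ∃ q : ℍ[ℝ], ‖q‖ ≤ 1 ∧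
        y = ‖∑ j ∈ Finset.range (n + 1), q ^ j * a j‖} =
      sSup {y : ℝ | ∃ q : ℍ[ℝ], ‖q‖ = 1 ∧
        y = ‖∑ j ∈ Finset.range (n + 1), q ^ j * a j‖} := by
  set P : ℍ[ℝ] → ℝ := fun q => ‖∑ j ∈ Finset.range (n + 1), q ^ j * a j‖ with hP
  have hcont : Continuous P := by
    apply Continuous.norm
    exact continuous_finset_sum _ fun j _ => (continuous_pow j).mul continuous_const
  have hball : {y : ℝ | ∃ q : ℍ[ℝ], ‖q‖ ≤ 1 ∧ y = P q} = P '' Metric.closedBall 0 1 := by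
    ext y
    simp [Metric.mem_closedBall, dist_zero_right, eq_comm, and_comm]
  have hsph : {y : ℝ | ∃ q : ℍ[ℝ], ‖q‖ = 1 ∧ y = P q} = P '' Metric.sphere 0 1 := by
    ext y
    simp [mem_sphere_zero_iff_norm, eq_comm, and_comm]
  have hbddb : BddAbove {y : ℝ | ∃ q : ℍ[ℝ], ‖q‖ ≤ 1 ∧ y = P q} := by
    rw [hball]
    exact ((isCompact_closedBall (0 : ℍ[ℝ]) 1).image hcont).bddAbove
  have hbdds : BddAbove {y : ℝ | ∃ q : ℍ[ℝ], ‖q‖ = 1 ∧ y = P q} := by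
    rw [hsph]
    exact ((isCompact_sphere (0 : ℍ[ℝ]) 1).image hcont).bddAbove
  have hnes : {y : ℝ | ∃ q : ℍ[ℝ], ‖q‖ = 1 ∧ y = P q}.Nonempty :=
    ⟨P 1, 1, norm_one, rfl⟩
  refine le_antisymm ?_ ?_
  · refine csSup_le ⟨P 0, 0, by simp, rfl⟩ ?_
    rintro y ⟨q, hq, rfl⟩
    exact aux_max_modulus n a
      (fun w hw => le_csSup hbdds ⟨w, hw, rfl⟩) hq
  · exact csSup_le_csSup hbddb hnes fun y => by
      rintro ⟨q, hq, rfl⟩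
      exact ⟨q, hq.le, rfl⟩
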